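/- In a two-population nonatomic game where NCDs route r and EVs route extended paths p, with link cost on l equal to d_l(z_l + z⁰_l)/c_l (z_l, z⁰_l the EV and NCD link flows), the joint equilibrium conditions for both populations are equivalent to the first-order optimality (KKT) conditions of minimizing a single convex potential ∑_l d_l (z_l + z⁰_l)² / (2 c_l) + (λ₂/λ₁)∑_p q_p G_p-term + (λ₃/λ₁)∑_p q_p Y_p over the product of the two demand simplices, provided the station delay term G is such that the full potential is convex and differentiable. -/

import Mathlib

open scoped Classical

private lemma sum_swap_filter' {A B : Type*} [Fintype A] [Fintype B]
    (uses : B → Finset A) (a : A → ℝ) (u : B → ℝ) :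
    ∑ l, ∑ p ∈ Finset.univ.filter (fun p => l ∈ uses p), a l * u p
      = ∑ p, (∑ l ∈ uses p, a l) * u p := by
  calc ∑ l, ∑ p ∈ Finset.univ.filter (fun p => l ∈ uses p), a l * u p
      = ∑ l, ∑ p, if l ∈ uses p then a l * u p else 0 := by
        simp [Finset.sum_filter]
    _ = ∑ p, ∑ l, if l ∈ uses p then a l * u p else 0 := Finset.sum_comm
    _ = ∑ p, (∑ l ∈ uses p, a l) * u p := by
        refine Finset.sum_congr rfl fun p _ => ?_
        rw [← Finset.sum_filter, Finset.filter_univ_mem, Finset.sum_mul]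

/-- Potential characterization of the coupled two-population equilibrium: with
link costs `d_l (z_l + z⁰_l)/c_l` shared additively by EVs and NCDs, EV extended-
path costs `λ₁F + λ₂G + λ₃Y` (with `Y` constant and `G` depending only on EV
flows, with primitive `Ψ` whose gradient is `G`), and NCD route costs `λ₁F`, the
joint Wardrop equilibrium conditions of both populations are equivalent to
minimizing the single convex differentiable potential
`Φ = ∑_l d_l (z_l+z⁰_l)²/(2c_l) + (λ₂/λ₁)Ψ + (λ₃/λ₁)∑_p Y_p q_p`
over the product of the two demand simplices (for a convex differentiable
potential, the KKT/first-order optimality conditions hold exactly at the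
minimizers). -/
theorem coupled_wardrop_iff_potential_min {A P R : Type*}
    [Fintype A] [Fintype P] [Fintype R]
    (usesP : P → Finset A) (usesR : R → Finset A)
    (d c : A → ℝ) (hd : ∀ l, 0 ≤ d l) (hc : ∀ l, 0 < c l)
    (G : (P → ℝ) → P → ℝ) (Y : P → ℝ) (Ψ : (P → ℝ) → ℝ)
    (l1 l2 l3 : ℝ) (hl1 : 0 < l1) (hl2 : 0 ≤ l2) (hl3 : 0 ≤ l3)
    (γ γ0 : ℝ) (hγ : 0 < γ) (hγ0 : 0 < γ0)
    (Z : (P → ℝ) × (R → ℝ) → A → ℝ)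
    (hZ : ∀ w l, Z w l =
      (∑ p ∈ Finset.univ.filter fun p => l ∈ usesP p, w.1 p) +
        ∑ r ∈ Finset.univ.filter fun r => l ∈ usesR r, w.2 r)
    (CEV : (P → ℝ) × (R → ℝ) → P → ℝ)
    (hCEV : ∀ w p, CEV w p =
      l1 * (∑ l ∈ usesP p, d l * Z w l / c l) + l2 * G w.1 p + l3 * Y p)
    (CNCD : (P → ℝ) × (R → ℝ) → R → ℝ)
    (hCNCD : ∀ w r, CNCD w r = l1 * ∑ l ∈ usesR r, d l * Z w l / c l)
    (K : Set ((P → ℝ) × (R → ℝ)))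
    (hK : K = {w | (∀ p, 0 ≤ w.1 p) ∧ (∑ p, w.1 p) = γ ∧
                   (∀ r, 0 ≤ w.2 r) ∧ (∑ r, w.2 r) = γ0})
    (Φ : (P → ℝ) × (R → ℝ) → ℝ)
    (hΦ : ∀ w, Φ w = (∑ l, d l * Z w l ^ 2 / (2 * c l)) +
      (l2 / l1) * Ψ w.1 + (l3 / l1) * ∑ p, Y p * w.1 p)
    (hΨgrad : ∀ q : P → ℝ, ∃ Lq : (P → ℝ) →L[ℝ] ℝ,
      HasFDerivAt Ψ Lq q ∧ ∀ v, Lq v = ∑ p, G q p * v p)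
    (hconv : ConvexOn ℝ K Φ) :
    ∀ w ∈ K,
      ((∀ p, 0 < w.1 p → ∀ p', CEV w p ≤ CEV w p') ∧
        (∀ r, 0 < w.2 r → ∀ r', CNCD w r ≤ CNCD w r')) ↔
        (∀ w' ∈ K, Φ w ≤ Φ w') := by
  have hl1' : l1 ≠ 0 := ne_of_gt hl1
  -- convexity of K
  have hKconv : Convex ℝ K := by
    rw [hK]
    intro x hx y hy a b ha hb hab
    obtain ⟨hx1, hx2, hx3, hx4⟩ := hx
    obtain ⟨hy1, hy2, hy3, hy4⟩ := hy
    refine ⟨fun p => ?_, ?_, fun r => ?_, ?_⟩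
    · exact add_nonneg (mul_nonneg ha (hx1 p)) (mul_nonneg hb (hy1 p))
    · show ∑ p, (a * x.1 p + b * y.1 p) = γ
      rw [Finset.sum_add_distrib, ← Finset.mul_sum, ← Finset.mul_sum, hx2, hy2,
        ← add_mul, hab, one_mul]
    · exact add_nonneg (mul_nonneg ha (hx3 r)) (mul_nonneg hb (hy3 r))
    · show ∑ r, (a * x.2 r + b * y.2 r) = γ0
      rw [Finset.sum_add_distrib, ← Finset.mul_sum, ← Finset.mul_sum, hx4, hy4,
        ← add_mul, hab, one_mul]
  intro w hw
  have hwK := hw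
  rw [hK] at hw
  obtain ⟨hw1, hw2, hw3, hw4⟩ := hw
  -- linearity of Z
  have hZlin : ∀ (t : ℝ) (v : (P → ℝ) × (R → ℝ)) (l : A),
      Z (w + t • v) l = Z w l + t * Z v l := by
    intro t v l
    simp only [hZ, Prod.fst_add, Prod.snd_add, Prod.smul_fst, Prod.smul_snd,
      Pi.add_apply, Pi.smul_apply, smul_eq_mul, Finset.sum_add_distrib,
      mul_add, Finset.mul_sum]
    ring
  -- directional derivative functional
  set D : ((P → ℝ) × (R → ℝ)) → ℝ := fun v =>
    (∑ p, (CEV w p / l1) * v.1 p) + ∑ r, (CNCD w r / l1) * v.2 r with hD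
  -- directional derivative of Φ at w along v equals D v
  have hderiv : ∀ v, HasDerivAt (fun t : ℝ => Φ (w + t • v)) (D v) 0 := by
    intro v
    obtain ⟨Lq, hLq, hLqv⟩ := hΨgrad w.1
    have h2 : HasDerivAt (fun t : ℝ => Ψ (w.1 + t • v.1)) (Lq v.1) 0 :=
      hLq.hasLineDerivAt v.1
    have h1 : HasDerivAt (fun t : ℝ => ∑ l, d l * (Z w l + t * Z v l) ^ 2 / (2 * c l))
        (∑ l, d l * Z w l * Z v l / c l) 0 := by
      apply HasDerivAt.fun_sum
      intro l _
      have hb : HasDerivAt (fun t : ℝ => Z w l + t * Z v l) (Z v l) 0 :=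
        (hasDerivAt_mul_const (Z v l)).const_add (Z w l)
      have heq : (fun t : ℝ => d l * (Z w l + t * Z v l) ^ 2 / (2 * c l))
          = fun t : ℝ => (Z w l + t * Z v l) ^ 2 * (d l / (2 * c l)) := by
        funext t; ring
      have h := (hb.pow 2).mul_const (d l / (2 * c l))
      have hval2 : (↑2 * (Z w l + (0:ℝ) * Z v l) ^ (2 - 1) * Z v l) * (d l / (2 * c l))
          = d l * Z w l * Z v l / c l := by
        have hcl : c l ≠ 0 := (hc l).ne'
        push_cast
        field_simp
        ring
      rw [heq]
      exact hval2 ▸ h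
    have h3 : HasDerivAt (fun t : ℝ => ∑ p, Y p * (w.1 p + t * v.1 p))
        (∑ p, Y p * v.1 p) 0 := by
      apply HasDerivAt.fun_sum
      intro p _
      exact ((hasDerivAt_mul_const (v.1 p)).const_add (w.1 p)).const_mul (Y p)
    have hsum := (h1.fun_add (h2.const_mul (l2 / l1))).fun_add (h3.const_mul (l3 / l1))
    have hfun : (fun t : ℝ =>
        (∑ l, d l * (Z w l + t * Z v l) ^ 2 / (2 * c l)) +
          (l2 / l1) * Ψ (w.1 + t • v.1) +
          (l3 / l1) * ∑ p, Y p * (w.1 p + t * v.1 p))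
        = fun t : ℝ => Φ (w + t • v) := by
      funext t
      rw [hΦ]
      simp only [hZlin]
      rfl
    rw [hfun] at hsum
    -- now show the derivative value equals D v
    have hp' : ∀ (p : P) (x : ℝ), (CEV w p / l1) * x
        = (∑ l ∈ usesP p, d l * Z w l / c l) * x
          + (l2 / l1) * (G w.1 p * x) + (l3 / l1) * (Y p * x) := by
      intro p x
      rw [hCEV]
      field_simp
    have hr' : ∀ (r : R) (x : ℝ), (CNCD w r / l1) * x
        = (∑ l ∈ usesR r, d l * Z w l / c l) * x := by
      intro r x
      rw [hCNCD]
      field_simp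
    have e1 : ∑ l, d l * Z w l * Z v l / c l
        = (∑ p, (∑ l ∈ usesP p, d l * Z w l / c l) * v.1 p)
          + ∑ r, (∑ l ∈ usesR r, d l * Z w l / c l) * v.2 r := by
      rw [← sum_swap_filter' usesP (fun l => d l * Z w l / c l) v.1,
        ← sum_swap_filter' usesR (fun l => d l * Z w l / c l) v.2,
        ← Finset.sum_add_distrib]
      refine Finset.sum_congr rfl fun l _ => ?_
      rw [← Finset.mul_sum, ← Finset.mul_sum, ← mul_add, hZ v l]
      ring
    have hval : (∑ l, d l * Z w l * Z v l / c l) + (l2 / l1) * Lq v.1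
        + (l3 / l1) * ∑ p, Y p * v.1 p = D v := by
      rw [hLqv, hD, e1]
      simp only [hp', hr', Finset.sum_add_distrib, Finset.mul_sum]
      ring
    rw [hval] at hsum
    exact hsum
  -- slope convergence
  have hslope : ∀ v : (P → ℝ) × (R → ℝ),
      Filter.Tendsto (fun t : ℝ => (Φ (w + t • v) - Φ w) / t)
        (nhdsWithin 0 (Set.Ioi 0)) (nhds (D v)) := by
    intro v
    have h := hasDerivAt_iff_tendsto_slope.1 (hderiv v)
    have hsub : Set.Ioi (0:ℝ) ⊆ {(0:ℝ)}ᶜ := fun x hx => (ne_of_gt hx)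
    have h' := h.mono_left (nhdsWithin_mono 0 hsub)
    have hg0 : w + (0:ℝ) • v = w := by simp
    refine h'.congr fun t => ?_
    rw [slope_def_field]
    rw [hg0, sub_zero]
  -- the variational inequality
  have VI_iff_min : (∀ w' ∈ K, 0 ≤ D (w' - w)) ↔ (∀ w' ∈ K, Φ w ≤ Φ w') := by
    constructor
    · intro hVI w' hw'
      have hkey : D (w' - w) ≤ Φ w' - Φ w := by
        refine le_of_tendsto (hslope (w' - w)) ?_
        filter_upwards [Ioo_mem_nhdsGT_of_mem
          (Set.mem_Ico.2 ⟨le_refl (0:ℝ), zero_lt_one⟩)] with t ht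
        obtain ⟨ht0, ht1⟩ := ht
        have hcomb : (1 - t) • w + t • w' = w + t • (w' - w) := by
          rw [sub_smul, one_smul, smul_sub]; abel
        have hc2 := hconv.2 hwK hw' (by linarith : (0:ℝ) ≤ 1 - t) ht0.le (by ring)
        rw [hcomb, smul_eq_mul, smul_eq_mul] at hc2
        rw [div_le_iff₀ ht0]
        nlinarith [hc2]
      have h0 := hVI w' hw'
      linarith
    · intro hmin w' hw'
      refine ge_of_tendsto (hslope (w' - w)) ?_
      filter_upwards [Ioo_mem_nhdsGT_of_mem
        (Set.mem_Ico.2 ⟨le_refl (0:ℝ), zero_lt_one⟩)] with t ht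
      obtain ⟨ht0, ht1⟩ := ht
      have hcomb : (1 - t) • w + t • w' = w + t • (w' - w) := by
        rw [sub_smul, one_smul, smul_sub]; abel
      have hmem : w + t • (w' - w) ∈ K := by
        rw [← hcomb]
        exact hKconv hwK hw' (by linarith) ht0.le (by ring)
      have := hmin _ hmem
      exact div_nonneg (by linarith) ht0.le
  rw [← VI_iff_min]
  constructor
  · -- Wardrop ⇒ VI
    rintro ⟨hEV, hNC⟩ w' hw'
    have hw'K := hw'
    rw [hK] at hw'
    obtain ⟨hw'1, hw'2, hw'3, hw'4⟩ := hw'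
    -- a used EV path
    obtain ⟨p0, hp0⟩ : ∃ p0, 0 < w.1 p0 := by
      by_contra h
      push_neg at h
      have : ∑ p, w.1 p = 0 :=
        Finset.sum_eq_zero fun p _ => le_antisymm (h p) (hw1 p)
      rw [hw2] at this
      linarith
    obtain ⟨r0, hr0⟩ : ∃ r0, 0 < w.2 r0 := by
      by_contra h
      push_neg at h
      have : ∑ r, w.2 r = 0 :=
        Finset.sum_eq_zero fun r _ => le_antisymm (h r) (hw3 r)
      rw [hw4] at this
      linarith
    have hμ : ∀ p, CEV w p0 ≤ CEV w p := hEV p0 hp0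
    have hν : ∀ r, CNCD w r0 ≤ CNCD w r := hNC r0 hr0
    have hEq : ∀ p, (CEV w p / l1) * w.1 p = (CEV w p0 / l1) * w.1 p := by
      intro p
      rcases eq_or_lt_of_le (hw1 p) with h | h
      · rw [← h, mul_zero, mul_zero]
      · rw [le_antisymm (hEV p h p0) (hμ p)]
    have hEqR : ∀ r, (CNCD w r / l1) * w.2 r = (CNCD w r0 / l1) * w.2 r := by
      intro r
      rcases eq_or_lt_of_le (hw3 r) with h | h
      · rw [← h, mul_zero, mul_zero]
      · rw [le_antisymm (hNC r h r0) (hν r)]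
    have hsplit : D (w' - w)
        = ((∑ p, (CEV w p / l1) * w'.1 p) - ∑ p, (CEV w p / l1) * w.1 p)
          + ((∑ r, (CNCD w r / l1) * w'.2 r) - ∑ r, (CNCD w r / l1) * w.2 r) := by
      rw [hD]
      simp only [Prod.fst_sub, Prod.snd_sub, Pi.sub_apply, mul_sub,
        Finset.sum_sub_distrib]
    have hA : ∑ p, (CEV w p0 / l1) * w'.1 p ≤ ∑ p, (CEV w p / l1) * w'.1 p := by
      refine Finset.sum_le_sum fun p _ => ?_
      have : CEV w p0 / l1 ≤ CEV w p / l1 := by gcongr; exact hμ p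
      exact mul_le_mul_of_nonneg_right this (hw'1 p)
    have hB : ∑ p, (CEV w p / l1) * w.1 p = ∑ p, (CEV w p0 / l1) * w.1 p :=
      Finset.sum_congr rfl fun p _ => hEq p
    have hA' : ∑ r, (CNCD w r0 / l1) * w'.2 r ≤ ∑ r, (CNCD w r / l1) * w'.2 r := by
      refine Finset.sum_le_sum fun r _ => ?_
      have : CNCD w r0 / l1 ≤ CNCD w r / l1 := by gcongr; exact hν r
      exact mul_le_mul_of_nonneg_right this (hw'3 r)
    have hB' : ∑ r, (CNCD w r / l1) * w.2 r = ∑ r, (CNCD w r0 / l1) * w.2 r :=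
      Finset.sum_congr rfl fun r _ => hEqR r
    have hC1 : ∑ p, (CEV w p0 / l1) * w'.1 p = (CEV w p0 / l1) * γ := by
      rw [← Finset.mul_sum, hw'2]
    have hC2 : ∑ p, (CEV w p0 / l1) * w.1 p = (CEV w p0 / l1) * γ := by
      rw [← Finset.mul_sum, hw2]
    have hC3 : ∑ r, (CNCD w r0 / l1) * w'.2 r = (CNCD w r0 / l1) * γ0 := by
      rw [← Finset.mul_sum, hw'4]
    have hC4 : ∑ r, (CNCD w r0 / l1) * w.2 r = (CNCD w r0 / l1) * γ0 := by
      rw [← Finset.mul_sum, hw4]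
    rw [hsplit, hB, hB']
    linarith
  · -- VI ⇒ Wardrop
    intro hVI
    constructor
    · intro p hp p'
      by_cases hpp : p' = p
      · subst hpp; exact le_refl _
      · set q' : P → ℝ := fun pp =>
          w.1 pp + w.1 p * ((if pp = p' then (1:ℝ) else 0) - (if pp = p then (1:ℝ) else 0)) with hq'
        have hmem : ((q', w.2) : (P → ℝ) × (R → ℝ)) ∈ K := by
          rw [hK]
          refine ⟨fun pp => ?_, ?_, hw3, hw4⟩
          · by_cases h1 : pp = p
            · subst h1
              simp [hq', hpp, Ne.symm hpp]
            · by_cases h2 : pp = p'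
              · subst h2
                have := hw1 pp
                simp [hq', h1]
                positivity
              · simp [hq', h1, h2, hw1 pp]
          · show ∑ pp, q' pp = γ
            simp only [hq', Finset.sum_add_distrib, ← Finset.mul_sum,
              Finset.sum_sub_distrib, Finset.sum_ite_eq', Finset.mem_univ,
              if_true]
            rw [hw2]; ring
        have h0 := hVI _ hmem
        have hred : D (((q', w.2) : (P → ℝ) × (R → ℝ)) - w)
            = w.1 p * (CEV w p' / l1 - CEV w p / l1) := by
          calc D (((q', w.2) : (P → ℝ) × (R → ℝ)) - w)
              = ∑ x, ((if x = p' then CEV w x / l1 * w.1 p else 0)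
                  - if x = p then CEV w x / l1 * w.1 p else 0) := by
                rw [hD]
                simp only [Prod.snd_sub, Pi.sub_apply, sub_self, mul_zero,
                  Finset.sum_const_zero, add_zero]
                refine Finset.sum_congr rfl fun x _ => ?_
                simp only [Prod.fst_sub, Pi.sub_apply, hq']
                split_ifs <;> ring
            _ = CEV w p' / l1 * w.1 p - CEV w p / l1 * w.1 p := by
                rw [Finset.sum_sub_distrib, Finset.sum_ite_eq', Finset.sum_ite_eq']
                simp
            _ = w.1 p * (CEV w p' / l1 - CEV w p / l1) := by ring
        rw [hred] at h0
        have h1 : 0 ≤ CEV w p' / l1 - CEV w p / l1 :=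
          nonneg_of_mul_nonneg_right h0 hp
        have h2 : CEV w p / l1 ≤ CEV w p' / l1 := by linarith
        rw [div_le_div_iff₀ hl1 hl1] at h2
        exact le_of_mul_le_mul_right h2 hl1
    · intro r hr r'
      by_cases hrr : r' = r
      · subst hrr; exact le_refl _
      · set q' : R → ℝ := fun rr =>
          w.2 rr + w.2 r * ((if rr = r' then (1:ℝ) else 0) - (if rr = r then (1:ℝ) else 0)) with hq'
        have hmem : ((w.1, q') : (P → ℝ) × (R → ℝ)) ∈ K := by
          rw [hK]
          refine ⟨hw1, hw2, fun rr => ?_, ?_⟩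
          · by_cases h1 : rr = r
            · subst h1
              simp [hq', hrr, Ne.symm hrr]
            · by_cases h2 : rr = r'
              · subst h2
                have := hw3 rr
                simp [hq', h1]
                positivity
              · simp [hq', h1, h2, hw3 rr]
          · show ∑ rr, q' rr = γ0
            simp only [hq', Finset.sum_add_distrib, ← Finset.mul_sum,
              Finset.sum_sub_distrib, Finset.sum_ite_eq', Finset.mem_univ,
              if_true]
            rw [hw4]; ring
        have h0 := hVI _ hmem
        have hred : D (((w.1, q') : (P → ℝ) × (R → ℝ)) - w)
            = w.2 r * (CNCD w r' / l1 - CNCD w r / l1) := by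
          calc D (((w.1, q') : (P → ℝ) × (R → ℝ)) - w)
              = ∑ x, ((if x = r' then CNCD w x / l1 * w.2 r else 0)
                  - if x = r then CNCD w x / l1 * w.2 r else 0) := by
                rw [hD]
                simp only [Prod.fst_sub, Pi.sub_apply, sub_self, mul_zero,
                  Finset.sum_const_zero, zero_add]
                refine Finset.sum_congr rfl fun x _ => ?_
                simp only [Prod.snd_sub, Pi.sub_apply, hq']
                split_ifs <;> ring
            _ = CNCD w r' / l1 * w.2 r - CNCD w r / l1 * w.2 r := by
                rw [Finset.sum_sub_distrib, Finset.sum_ite_eq', Finset.sum_ite_eq']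
                simp
            _ = w.2 r * (CNCD w r' / l1 - CNCD w r / l1) := by ring
        rw [hred] at h0
        have h1 : 0 ≤ CNCD w r' / l1 - CNCD w r / l1 :=
          nonneg_of_mul_nonneg_right h0 hr
        have h2 : CNCD w r / l1 ≤ CNCD w r' / l1 := by linarith
        rw [div_le_div_iff₀ hl1 hl1] at h2
        exact le_of_mul_le_mul_right h2 hl1
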